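/- (Lemma on minimizing directions, algebraic form of the paper's Lemma 2.5/`Lemma inequality'.) Let R be a Kähler-like curvature tensor on V and let u be a unit vector that minimizes the holomorphic sectional curvature over unit vectors, i.e. H(u) ≤ H(v) for every unit vector v ∈ V. Then for every unit vector v ∈ V, the real number R(u,u,v,v) satisfies R(u,u,v,v) ≥ ((1 + |⟨u,v⟩|²)/2) · H(u). -/

import Mathlib

/-- A Kähler-like curvature tensor on a complex vector space `V`:
a map `R : V × V × V × V → ℂ` that is complex-linear in the first and third
arguments, conjugate-linear in the second and fourth arguments, and satisfies
the symmetries `R(X,Y,Z,W) = R(Z,Y,X,W)` and `R(X,Y,Z,W) = conj (R(Y,X,W,Z))`. -/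
structure IsKahlerLike {V : Type*} [AddCommGroup V] [Module ℂ V]
    (R : V → V → V → V → ℂ) : Prop where
  add1 : ∀ X X' Y Z W, R (X + X') Y Z W = R X Y Z W + R X' Y Z W
  smul1 : ∀ (a : ℂ) (X Y Z W), R (a • X) Y Z W = a * R X Y Z W
  add2 : ∀ X Y Y' Z W, R X (Y + Y') Z W = R X Y Z W + R X Y' Z W
  smul2 : ∀ (a : ℂ) (X Y Z W), R X (a • Y) Z W = (starRingEnd ℂ) a * R X Y Z W
  add3 : ∀ X Y Z Z' W, R X Y (Z + Z') W = R X Y Z W + R X Y Z' W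
  smul3 : ∀ (a : ℂ) (X Y Z W), R X Y (a • Z) W = a * R X Y Z W
  add4 : ∀ X Y Z W W', R X Y Z (W + W') = R X Y Z W + R X Y Z W'
  smul4 : ∀ (a : ℂ) (X Y Z W), R X Y Z (a • W) = (starRingEnd ℂ) a * R X Y Z W
  sym13 : ∀ X Y Z W, R X Y Z W = R Z Y X W
  symConj : ∀ X Y Z W, R X Y Z W = (starRingEnd ℂ) (R Y X W Z)

private lemma klmd_lim3 (b c1 c2 c3 : ℝ)
    (h : ∀ s : ℝ, 0 < s → 0 ≤ b + c1*s + c2*s^2 + c3*s^3) : 0 ≤ b := by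
  have hc : Continuous fun s : ℝ => b + c1*s + c2*s^2 + c3*s^3 := by continuity
  have ht : Filter.Tendsto (fun s : ℝ => b + c1*s + c2*s^2 + c3*s^3)
      (nhdsWithin 0 (Set.Ioi 0)) (nhds b) := by
    have := hc.tendsto' 0 b (by norm_num)
    exact this.mono_left nhdsWithin_le_nhds
  exact ge_of_tendsto ht (by filter_upwards [self_mem_nhdsWithin] with s hs using h s hs)

private lemma klmd_quartic (p m q n : ℝ)
    (h : ∀ s : ℝ, 0 ≤ 4*p*s + m*s^2 + 4*q*s^3 + n*s^4) : p = 0 ∧ 0 ≤ m := by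
  have div1 : ∀ s : ℝ, 0 < s → 0 ≤ 4*p + m*s + 4*q*s^2 + n*s^3 := by
    intro s hs
    have h2 : 0 ≤ s * (4*p + m*s + 4*q*s^2 + n*s^3) := by nlinarith [h s]
    exact (mul_nonneg_iff_of_pos_left hs).mp h2
  have div2 : ∀ s : ℝ, 0 < s → 0 ≤ (-4)*p + m*s + (-4)*q*s^2 + n*s^3 := by
    intro s hs
    have h2 : 0 ≤ s * ((-4)*p + m*s + (-4)*q*s^2 + n*s^3) := by nlinarith [h (-s)]
    exact (mul_nonneg_iff_of_pos_left hs).mp h2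
  have hp1 : 0 ≤ 4*p := klmd_lim3 _ _ _ _ div1
  have hp2 : 0 ≤ (-4)*p := klmd_lim3 _ _ _ _ div2
  have hp : p = 0 := by linarith
  refine ⟨hp, ?_⟩
  have div3 : ∀ s : ℝ, 0 < s → 0 ≤ m + 4*q*s + n*s^2 + 0*s^3 := by
    intro s hs
    have h2 : 0 ≤ (s*s) * (m + 4*q*s + n*s^2 + 0*s^3) := by nlinarith [h s]
    exact (mul_nonneg_iff_of_pos_left (mul_pos hs hs)).mp h2
  exact klmd_lim3 _ _ _ _ div3

private lemma klmd_expand {V : Type*} [AddCommGroup V] [Module ℂ V]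
    (R : V → V → V → V → ℂ) (hR : IsKahlerLike R) (u w : V) (t : ℂ) :
    R (u+t•w) (u+t•w) (u+t•w) (u+t•w)
      = R u u u u + 2*t*(starRingEnd ℂ) (R u u u w) + 2*((starRingEnd ℂ) t)*(R u u u w)
        + 4*(t*(starRingEnd ℂ) t)*(R u u w w)
        + t*t*(starRingEnd ℂ) (R u w u w) + ((starRingEnd ℂ) t)*((starRingEnd ℂ) t)*(R u w u w)
        + 2*(t*((starRingEnd ℂ) t)*((starRingEnd ℂ) t))*(R u w w w)
        + 2*(t*t*((starRingEnd ℂ) t))*((starRingEnd ℂ) (R u w w w))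
        + (t*(starRingEnd ℂ) t)*(t*(starRingEnd ℂ) t)*(R w w w w) := by
  have e1 : R w u u u = (starRingEnd ℂ) (R u u u w) :=
    (hR.sym13 w u u u).trans (hR.symConj u u w u)
  have e2 : R u w u u = R u u u w := by
    rw [hR.symConj u w u u, e1, Complex.conj_conj]
  have e3 : R u u w u = (starRingEnd ℂ) (R u u u w) := hR.symConj u u w u
  have e4 : R w u u w = R u u w w := hR.sym13 w u u w
  have e5 : R u w w u = R u u w w := by
    rw [hR.symConj u w w u, e4, ← hR.symConj u u w w]
  have e6 : R w w u u = R u u w w := (hR.sym13 w w u u).trans e5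
  have e7 : R w u w u = (starRingEnd ℂ) (R u w u w) := hR.symConj w u w u
  have e8 : R w u w w = (starRingEnd ℂ) (R u w w w) := hR.symConj w u w w
  have e9 : R w w u w = R u w w w := hR.sym13 w w u w
  have e10 : R w w w u = (starRingEnd ℂ) (R u w w w) := by
    rw [hR.symConj w w w u, e9]
  simp only [hR.add1, hR.add2, hR.add3, hR.add4, hR.smul1, hR.smul2, hR.smul3, hR.smul4,
    e1, e2, e3, e4, e5, e6, e7, e8, e9, e10]
  ring

private lemma klmd_re_real (Ax P B C Q D : ℂ) (s : ℝ) :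
    (Ax + 2*(s:ℂ)*(starRingEnd ℂ) P + 2*((starRingEnd ℂ) (s:ℂ))*P
      + 4*((s:ℂ)*(starRingEnd ℂ) (s:ℂ))*B
      + (s:ℂ)*(s:ℂ)*(starRingEnd ℂ) C + ((starRingEnd ℂ) (s:ℂ))*((starRingEnd ℂ) (s:ℂ))*C
      + 2*((s:ℂ)*((starRingEnd ℂ) (s:ℂ))*((starRingEnd ℂ) (s:ℂ)))*Q
      + 2*((s:ℂ)*(s:ℂ)*((starRingEnd ℂ) (s:ℂ)))*((starRingEnd ℂ) Q)
      + ((s:ℂ)*(starRingEnd ℂ) (s:ℂ))*((s:ℂ)*(starRingEnd ℂ) (s:ℂ))*D).re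
    = Ax.re + 4*P.re*s + (4*B.re + 2*C.re)*s^2 + 4*Q.re*s^3 + D.re*s^4 := by
  simp [Complex.conj_ofReal, Complex.add_re, Complex.mul_re, Complex.mul_im,
    Complex.ofReal_re, Complex.ofReal_im, Complex.conj_re, Complex.conj_im]
  ring

private lemma klmd_re_imag (Ax P B C Q D : ℂ) (s : ℝ) (t : ℂ) (ht : t = (s:ℂ)*Complex.I) :
    (Ax + 2*t*(starRingEnd ℂ) P + 2*((starRingEnd ℂ) t)*P
      + 4*(t*(starRingEnd ℂ) t)*B
      + t*t*(starRingEnd ℂ) C + ((starRingEnd ℂ) t)*((starRingEnd ℂ) t)*C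
      + 2*(t*((starRingEnd ℂ) t)*((starRingEnd ℂ) t))*Q
      + 2*(t*t*((starRingEnd ℂ) t))*((starRingEnd ℂ) Q)
      + (t*(starRingEnd ℂ) t)*(t*(starRingEnd ℂ) t)*D).re
    = Ax.re + 4*P.im*s + (4*B.re - 2*C.re)*s^2 + 4*Q.im*s^3 + D.re*s^4 := by
  subst ht
  simp [Complex.conj_ofReal, Complex.add_re, Complex.mul_re, Complex.mul_im,
    Complex.ofReal_re, Complex.ofReal_im, Complex.conj_re, Complex.conj_im,
    Complex.I_re, Complex.I_im, map_mul, Complex.conj_I]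
  ring

private lemma klmd_orth {V : Type*} [NormedAddCommGroup V] [InnerProductSpace ℂ V]
    (R : V → V → V → V → ℂ) (hR : IsKahlerLike R)
    (u : V) (hu : ‖u‖ = 1)
    (hmin : ∀ v : V, ‖v‖ = 1 → (R u u u u).re ≤ (R v v v v).re)
    (w : V) (hw : ‖w‖ = 1) (how : (inner ℂ u w : ℂ) = 0) :
    R u u u w = 0 ∧ (R u u u u).re / 2 ≤ (R u u w w).re := by
  have step : ∀ t : ℂ, (1+‖t‖^2)^2 * (R u u u u).re
      ≤ (R (u+t•w) (u+t•w) (u+t•w) (u+t•w)).re := by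
    intro t
    set x := u + t•w with hx
    have hxn : ‖x‖^2 = 1 + ‖t‖^2 := by
      rw [hx, @norm_add_sq ℂ]
      rw [inner_smul_right, how, mul_zero]
      simp [hu, norm_smul, hw]
    set n : ℝ := Real.sqrt (1 + ‖t‖^2) with hn
    have hpos : (0:ℝ) < 1 + ‖t‖^2 := by positivity
    have hnpos : 0 < n := Real.sqrt_pos.mpr hpos
    have hn2 : n^2 = 1 + ‖t‖^2 := Real.sq_sqrt hpos.le
    have hxnn : ‖x‖ = n := by
      rw [← Real.sqrt_sq (norm_nonneg x), hxn, hn]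
    have hv1 : ‖((n⁻¹ : ℝ) : ℂ) • x‖ = 1 := by
      rw [norm_smul, hxnn]
      simp [abs_of_pos hnpos, inv_mul_cancel₀ hnpos.ne']
    have h1 := hmin _ hv1
    have h2 : R (((n⁻¹ : ℝ) : ℂ) • x) (((n⁻¹ : ℝ) : ℂ) • x) (((n⁻¹ : ℝ) : ℂ) • x)
        (((n⁻¹ : ℝ) : ℂ) • x) = (((n⁻¹^4 : ℝ)) : ℂ) * R x x x x := by
      rw [hR.smul1, hR.smul2, hR.smul3, hR.smul4, Complex.conj_ofReal]
      push_cast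
      ring
    rw [h2] at h1
    have h3 : (R u u u u).re ≤ n⁻¹^4 * (R x x x x).re := by
      have : ((((n⁻¹^4 : ℝ)) : ℂ) * R x x x x).re = n⁻¹^4 * (R x x x x).re :=
        Complex.re_ofReal_mul _ _
      linarith [h1, this.ge, this.le]
    have h4 : n^4 = (1+‖t‖^2)^2 := by rw [← hn2]; ring
    calc (1+‖t‖^2)^2 * (R u u u u).re = n^4 * (R u u u u).re := by rw [h4]
      _ ≤ n^4 * (n⁻¹^4 * (R x x x x).re) := by
          apply mul_le_mul_of_nonneg_left h3 (by positivity)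
      _ = (R x x x x).re := by
          field_simp
  have hq1 : ∀ s : ℝ, 0 ≤ 4*(R u u u w).re*s
      + (4*(R u u w w).re + 2*(R u w u w).re - 2*(R u u u u).re)*s^2
      + 4*(R u w w w).re*s^3 + ((R w w w w).re - (R u u u u).re)*s^4 := by
    intro s
    have h := step (s:ℂ)
    rw [klmd_expand R hR u w, klmd_re_real] at h
    have hns : ‖((s:ℂ))‖^2 = s^2 := by
      rw [Complex.norm_real]; exact sq_abs s
    rw [hns] at h
    nlinarith [h]
  have hq2 : ∀ s : ℝ, 0 ≤ 4*(R u u u w).im*s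
      + (4*(R u u w w).re - 2*(R u w u w).re - 2*(R u u u u).re)*s^2
      + 4*(R u w w w).im*s^3 + ((R w w w w).re - (R u u u u).re)*s^4 := by
    intro s
    have h := step ((s:ℂ)*Complex.I)
    rw [klmd_expand R hR u w, klmd_re_imag _ _ _ _ _ _ s _ rfl] at h
    have hns : ‖((s:ℂ)*Complex.I)‖^2 = s^2 := by
      rw [norm_mul, Complex.norm_I, mul_one, Complex.norm_real]; exact sq_abs s
    rw [hns] at h
    nlinarith [h]
  obtain ⟨hp1, hm1⟩ := klmd_quartic _ _ _ _ hq1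
  obtain ⟨hp2, hm2⟩ := klmd_quartic _ _ _ _ hq2
  exact ⟨Complex.ext hp1 hp2, by linarith⟩

/-- Minimizing-direction inequality: if the unit vector `u` minimizes the holomorphic
sectional curvature `H(v) = R(v,v,v,v)` over unit vectors, then for every unit vector `v` one
has `R(u,u,v,v) ≥ ((1 + |⟨u,v⟩|²)/2) · H(u)`. -/
theorem kahlerLike_min_direction_ineq {V : Type*} [NormedAddCommGroup V] [InnerProductSpace ℂ V]
    [FiniteDimensional ℂ V]
    (R : V → V → V → V → ℂ) (hR : IsKahlerLike R)
    (u : V) (hu : ‖u‖ = 1)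
    (hmin : ∀ v : V, ‖v‖ = 1 → (R u u u u).re ≤ (R v v v v).re) :
    ∀ v : V, ‖v‖ = 1 →
      (1 + ‖(inner ℂ u v : ℂ)‖ ^ 2) / 2 * (R u u u u).re ≤ (R u u v v).re := by
  intro v hv
  set a : ℂ := (inner ℂ u v : ℂ) with ha
  by_cases hw0 : v - a • u = 0
  · have hv' : v = a • u := by rwa [sub_eq_zero] at hw0
    have han : ‖a‖ = 1 := by
      have : ‖v‖ = ‖a‖ * ‖u‖ := by rw [hv', norm_smul]
      rw [hu, mul_one, hv] at this
      exact this.symm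
    have hkey : R u u v v = (a * (starRingEnd ℂ) a) * R u u u u := by
      conv_lhs => rw [hv']
      rw [hR.smul3, hR.smul4]
      ring
    have haa : a * (starRingEnd ℂ) a = 1 := by
      rw [Complex.mul_conj]
      norm_cast
      simp [Complex.normSq_eq_norm_sq, han]
    rw [hkey, haa, one_mul, han]
    norm_num
  · set w0 : V := v - a • u with hw0def
    have hinneru : (inner ℂ u u : ℂ) = 1 := by
      rw [inner_self_eq_norm_sq_to_K, hu]
      norm_num
    have how0 : (inner ℂ u w0 : ℂ) = 0 := by
      rw [hw0def, inner_sub_right, inner_smul_right, hinneru, mul_one, ← ha, sub_self]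
    have hb2 : ‖w0‖^2 = 1 - ‖a‖^2 := by
      have h1 : ‖w0‖^2 = ‖v‖^2 - 2 * (Complex.re (inner ℂ v (a • u) : ℂ)) + ‖a • u‖^2 := by
        rw [hw0def, @norm_sub_sq ℂ]
        simp [RCLike.re_to_complex]
        rw [inner_smul_right, Complex.mul_re]
      have h2 : (inner ℂ v (a • u) : ℂ) = a * (starRingEnd ℂ) a := by
        rw [inner_smul_right, ← inner_conj_symm, ← ha]
      have h3 : (a * (starRingEnd ℂ) a).re = ‖a‖^2 := by
        rw [Complex.mul_conj]
        norm_cast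
        simp [Complex.normSq_eq_norm_sq]
      rw [h1, h2, h3, hv, norm_smul, hu, mul_one]
      ring
    set b : ℝ := ‖w0‖ with hbdef
    have hbpos : 0 < b := norm_pos_iff.mpr hw0
    obtain ⟨w, hwdef⟩ : ∃ w : V, w = ((b⁻¹ : ℝ) : ℂ) • w0 := ⟨_, rfl⟩
    have hw1 : ‖w‖ = 1 := by
      rw [hwdef, norm_smul, ← hbdef]
      simp [abs_of_pos hbpos, inv_mul_cancel₀ hbpos.ne']
    have howw : (inner ℂ u w : ℂ) = 0 := by
      rw [hwdef, inner_smul_right, how0, mul_zero]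
    obtain ⟨hP, hB⟩ := klmd_orth R hR u hu hmin w hw1 howw
    have hPu : R u u w u = 0 := by
      rw [hR.symConj u u w u, hP, map_zero]
    have hvw : v = a • u + ((b : ℝ) : ℂ) • w := by
      rw [hwdef, smul_smul]
      have : ((b : ℝ) : ℂ) * ((b⁻¹ : ℝ) : ℂ) = 1 := by
        rw [← Complex.ofReal_mul, mul_inv_cancel₀ hbpos.ne', Complex.ofReal_one]
      rw [this, one_smul, hw0def]
      abel
    have hkey : R u u v v = (a * (starRingEnd ℂ) a) * R u u u u
        + (((b^2 : ℝ)) : ℂ) * R u u w w := by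
      conv_lhs => rw [hvw]
      simp only [hR.add3, hR.add4, hR.smul3, hR.smul4, hP, hPu, Complex.conj_ofReal,
        mul_zero, zero_mul, add_zero]
      push_cast
      ring
    have haa : a * (starRingEnd ℂ) a = ((‖a‖^2 : ℝ) : ℂ) := by
      rw [Complex.mul_conj]
      norm_cast
      simp [Complex.normSq_eq_norm_sq]
    have hre : (R u u v v).re = ‖a‖^2 * (R u u u u).re + b^2 * (R u u w w).re := by
      rw [hkey, haa, Complex.add_re, Complex.re_ofReal_mul, Complex.re_ofReal_mul]
    have hb2' : b^2 = 1 - ‖a‖^2 := hb2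
    rw [hb2'] at hre
    rw [hre]
    nlinarith [mul_nonneg (by nlinarith [sq_nonneg b] : (0:ℝ) ≤ 1 - ‖a‖^2)
      (by linarith : 0 ≤ (R u u w w).re - (R u u u u).re/2)]
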